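/- Let Σ be a d × d real symmetric positive semidefinite matrix, let σ > 0, and let Δ ∈ ℝᵈ. Then det(σ²·I + Σ) > 0, and (1/2)·( trace(σ²·I + Σ)/σ² + ‖Δ‖²/σ² − d + log(det(σ²·I)) − log(det(σ²·I + Σ)) ) ≤ ‖Δ‖²/(2σ²) + ‖Σ‖_F²/(4σ⁴). (The left-hand side is the Kullback–Leibler divergence KL(N(m, σ²I + Σ) ‖ N(c, σ²I)) of two d-dimensional Gaussians with Δ = c − m, so this bounds the error of mode-substitution re-annealing under a local Gaussian conditional surrogate.) -/

import Mathlib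

open Matrix

private lemma log_quad_bound {u : ℝ} (hu : 0 ≤ u) :
    u - Real.log (1 + u) ≤ u ^ 2 / 2 := by
  have key : ∀ x ∈ Set.Ici (0:ℝ),
      HasDerivAt (fun y : ℝ => Real.log (1 + y) - (y - y ^ 2 / 2))
        ((1 + x)⁻¹ - (1 - x)) x := by
    intro x hx
    have hx0 : (0:ℝ) ≤ x := hx
    have h1 : HasDerivAt (fun y : ℝ => 1 + y) 1 x := by
      simpa using (hasDerivAt_id x).const_add 1
    have h2 : HasDerivAt (fun y : ℝ => Real.log (1 + y)) (1 / (1 + x)) x :=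
      h1.log (by linarith)
    have h3 : HasDerivAt (fun y : ℝ => y - y ^ 2 / 2) (1 - 2 * x / 2) x := by
      have := ((hasDerivAt_pow 2 x).div_const 2)
      exact ((hasDerivAt_id' x).sub this).congr_deriv (by norm_num)
    have := h2.sub h3
    exact this.congr_deriv (by ring)
  have hmono : MonotoneOn (fun y : ℝ => Real.log (1 + y) - (y - y ^ 2 / 2)) (Set.Ici 0) := by
    apply monotoneOn_of_deriv_nonneg (convex_Ici 0)
    · exact fun x hx => ((key x hx).continuousAt).continuousWithinAt
    · intro x hx
      rw [interior_Ici] at hx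
      exact ((key x (Set.mem_Ici.mpr (le_of_lt (Set.mem_Ioi.mp hx)))).differentiableAt).differentiableWithinAt
    · intro x hx
      rw [interior_Ici] at hx
      rw [(key x (Set.mem_Ici.mpr (le_of_lt (Set.mem_Ioi.mp hx)))).deriv]
      have h1x : (0:ℝ) < 1 + x := by linarith [hx.out]
      rw [sub_nonneg, ← sub_nonneg]
      have : (1 + x)⁻¹ - (1 - x) = x ^ 2 / (1 + x) := by field_simp; ring
      rw [this]
      positivity
  have h0 : (fun y : ℝ => Real.log (1 + y) - (y - y ^ 2 / 2)) 0 ≤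
      (fun y : ℝ => Real.log (1 + y) - (y - y ^ 2 / 2)) u :=
    hmono (Set.self_mem_Ici) hu hu
  simp only [Real.log_one, add_zero] at h0
  nlinarith [h0]

theorem stmt_14 {d : ℕ} (S : Matrix (Fin d) (Fin d) ℝ) (hS : S.PosSemidef)
    (σ : ℝ) (hσ : 0 < σ) (Δ : EuclideanSpace ℝ (Fin d)) :
    0 < (σ ^ 2 • (1 : Matrix (Fin d) (Fin d) ℝ) + S).det ∧
      (1 / 2) *
          ((σ ^ 2 • (1 : Matrix (Fin d) (Fin d) ℝ) + S).trace / σ ^ 2 +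
            ‖Δ‖ ^ 2 / σ ^ 2 - (d : ℝ) +
            Real.log ((σ ^ 2 • (1 : Matrix (Fin d) (Fin d) ℝ)).det) -
            Real.log ((σ ^ 2 • (1 : Matrix (Fin d) (Fin d) ℝ) + S).det)) ≤
        ‖Δ‖ ^ 2 / (2 * σ ^ 2) + (Sᵀ * S).trace / (4 * σ ^ 4) := by
  have hσ2 : (0:ℝ) < σ ^ 2 := by positivity
  have hH := hS.isHermitian
  set e := hH.eigenvalues with he
  set U := (hH.eigenvectorUnitary : Matrix (Fin d) (Fin d) ℝ) with hU
  have hUU : U * star U = 1 := (Matrix.mem_unitaryGroup_iff).mp hH.eigenvectorUnitary.2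
  have hUU' : star U * U = 1 := (Matrix.mem_unitaryGroup_iff').mp hH.eigenvectorUnitary.2
  have hcoe : (RCLike.ofReal ∘ e : Fin d → ℝ) = e := by funext i; simp
  have hspec : S = U * diagonal e * star U := by
    have := hH.spectral_theorem
    rwa [hcoe] at this
  have henn : ∀ i, 0 ≤ e i := fun i => hS.eigenvalues_nonneg i
  -- determinant fact
  have hdiag : σ ^ 2 • (1 : Matrix (Fin d) (Fin d) ℝ) + diagonal e
      = diagonal (fun i => σ ^ 2 + e i) := by
    rw [smul_one_eq_diagonal, diagonal_add]
  have hkey : σ ^ 2 • (1 : Matrix (Fin d) (Fin d) ℝ) + S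
      = U * diagonal (fun i => σ ^ 2 + e i) * star U := by
    rw [← hdiag, Matrix.mul_add, Matrix.add_mul, hspec]
    congr 1
    rw [Matrix.mul_smul, mul_one, Matrix.smul_mul, hUU]
  have hdetU : U.det * (star U).det = 1 := by
    rw [← det_mul, hUU, det_one]
  have hdet : (σ ^ 2 • (1 : Matrix (Fin d) (Fin d) ℝ) + S).det = ∏ i, (σ ^ 2 + e i) := by
    rw [hkey, det_mul, det_mul, mul_comm U.det, mul_assoc, hdetU, mul_one, det_diagonal]
  have hpos : ∀ i, (0:ℝ) < σ ^ 2 + e i := fun i => by have := henn i; linarith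
  have hdetpos : 0 < (σ ^ 2 • (1 : Matrix (Fin d) (Fin d) ℝ) + S).det := by
    rw [hdet]; exact Finset.prod_pos fun i _ => hpos i
  refine ⟨hdetpos, ?_⟩
  -- traces
  have htrS : S.trace = ∑ i, e i := by
    rw [hspec, Matrix.trace_mul_cycle, hUU', Matrix.one_mul, trace_diagonal]
  have htr : (σ ^ 2 • (1 : Matrix (Fin d) (Fin d) ℝ) + S).trace = σ ^ 2 * d + ∑ i, e i := by
    rw [trace_add, trace_smul, trace_one, htrS]
    simp [smul_eq_mul]
  have hT : Sᵀ = S := by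
    rw [← conjTranspose_eq_transpose_of_trivial]; exact hH
  have htr2 : (Sᵀ * S).trace = ∑ i, (e i) ^ 2 := by
    rw [hT]
    conv_lhs => rw [hspec]
    rw [show U * diagonal e * star U * (U * diagonal e * star U)
        = U * (diagonal e * (star U * U) * diagonal e) * star U by
      simp only [Matrix.mul_assoc]]
    rw [hUU', Matrix.mul_one, diagonal_mul_diagonal, Matrix.trace_mul_cycle,
      hUU', Matrix.one_mul, trace_diagonal]
    simp [pow_two]
  -- det of σ²I
  have hdet1 : (σ ^ 2 • (1 : Matrix (Fin d) (Fin d) ℝ)).det = (σ ^ 2) ^ d := by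
    rw [det_smul, det_one, mul_one, Fintype.card_fin]
  -- logs
  have hlog1 : Real.log ((σ ^ 2 • (1 : Matrix (Fin d) (Fin d) ℝ)).det)
      = d * Real.log (σ ^ 2) := by rw [hdet1, Real.log_pow]
  have hlog2 : Real.log ((σ ^ 2 • (1 : Matrix (Fin d) (Fin d) ℝ) + S).det)
      = ∑ i, Real.log (σ ^ 2 + e i) := by
    rw [hdet, Real.log_prod]
    exact fun i _ => (hpos i).ne'
  rw [htr, hlog1, hlog2, htr2]
  -- pointwise bound
  have hpt : ∀ i, e i / σ ^ 2 + Real.log (σ ^ 2) - Real.log (σ ^ 2 + e i)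
      ≤ (e i) ^ 2 / (2 * σ ^ 4) := by
    intro i
    have hu : (0:ℝ) ≤ e i / σ ^ 2 := div_nonneg (henn i) hσ2.le
    have hfac : σ ^ 2 + e i = σ ^ 2 * (1 + e i / σ ^ 2) := by field_simp
    have h1u : (0:ℝ) < 1 + e i / σ ^ 2 := by linarith [hu]
    have hlog : Real.log (σ ^ 2 + e i)
        = Real.log (σ ^ 2) + Real.log (1 + e i / σ ^ 2) := by
      rw [hfac, Real.log_mul hσ2.ne' h1u.ne']
    rw [hlog]
    have hb := log_quad_bound hu
    have hsq : (e i / σ ^ 2) ^ 2 / 2 = (e i) ^ 2 / (2 * σ ^ 4) := by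
      rw [div_pow, div_div]
      congr 1
      ring
    rw [hsq] at hb
    linarith
  have hsum : ∑ i, (e i / σ ^ 2 + Real.log (σ ^ 2) - Real.log (σ ^ 2 + e i))
      ≤ ∑ i, (e i) ^ 2 / (2 * σ ^ 4) :=
    Finset.sum_le_sum fun i _ => hpt i
  have hexp1 : ∑ i, (e i / σ ^ 2 + Real.log (σ ^ 2) - Real.log (σ ^ 2 + e i))
      = (∑ i, e i) / σ ^ 2 + d * Real.log (σ ^ 2) - ∑ i, Real.log (σ ^ 2 + e i) := by
    rw [Finset.sum_sub_distrib, Finset.sum_add_distrib, ← Finset.sum_div, Finset.sum_const,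
      Finset.card_univ, Fintype.card_fin, nsmul_eq_mul]
  have hexp2 : ∑ i, (e i) ^ 2 / (2 * σ ^ 4) = (∑ i, (e i) ^ 2) / (2 * σ ^ 4) := by
    rw [← Finset.sum_div]
  rw [hexp1, hexp2] at hsum
  have hd : (σ ^ 2 * d + ∑ i, e i) / σ ^ 2 = (d : ℝ) + (∑ i, e i) / σ ^ 2 := by
    field_simp
  rw [hd]
  have hh1 : (∑ i, (e i) ^ 2) / (4 * σ ^ 4) = (1/2) * ((∑ i, (e i) ^ 2) / (2 * σ ^ 4)) := by
    ring
  have hh2 : ‖Δ‖ ^ 2 / (2 * σ ^ 2) = (1/2) * (‖Δ‖ ^ 2 / σ ^ 2) := by ring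
  rw [hh1, hh2]
  linarith [hsum]
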